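/- Let $n \ge 1$ and let $t$ be an integer with $2\sqrt{n} \le t \le n$, and let $0 < p < n^{-1/2}$. Then there is a universal constant $c > 0$ such that $\Pr[\mathrm{Bin}(n,p) = t] \ge \left(\Pr[\mathrm{Bin}(n, n^{-1/2}) = t]\right)^{c \log(1/p)}$. -/

import Mathlib

set_option maxHeartbeats 1000000

open Real Finset

lemma aux_term_le_one (n t : ℕ) (ht : t ≤ n) {a b : ℝ} (ha : 0 ≤ a) (hb : 0 ≤ b)
    (hab : a + b = 1) :
    a ^ t * b ^ (n - t) * (n.choose t : ℝ) ≤ 1 := by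
  have h := add_pow a b n
  rw [hab, one_pow] at h
  rw [h]
  exact Finset.single_le_sum (f := fun k => a ^ k * b ^ (n - k) * (n.choose k : ℝ))
    (fun i _ => by positivity)
    (Finset.mem_range.mpr (Nat.lt_succ_of_le ht))

theorem stmt14 : ∃ c : ℝ, 0 < c ∧
    ∀ (n t : ℕ) (p : ℝ), 1 ≤ n → 2 * Real.sqrt n ≤ t → t ≤ n →
      0 < p → p < (n : ℝ) ^ (-(1 / 2) : ℝ) →
      ((n.choose t : ℝ) * ((n : ℝ) ^ (-(1 / 2) : ℝ)) ^ t *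
          (1 - (n : ℝ) ^ (-(1 / 2) : ℝ)) ^ (n - t)) ^ (c * Real.log (1 / p)) ≤
        (n.choose t : ℝ) * p ^ t * (1 - p) ^ (n - t) := by
  refine ⟨20, by norm_num, ?_⟩
  intro n t p hn ht2 htn hp0 hpq
  have hn0 : (0:ℝ) < n := by exact_mod_cast hn
  set s : ℝ := Real.sqrt n with hsdef
  have hs0 : 0 < s := Real.sqrt_pos.mpr hn0
  have hss : s * s = n := Real.mul_self_sqrt hn0.le
  have hq : (n:ℝ) ^ (-(1/2) : ℝ) = s⁻¹ := by
    rw [Real.rpow_neg hn0.le, hsdef, Real.sqrt_eq_rpow]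
  have htn' : (t:ℝ) ≤ n := by exact_mod_cast htn
  have hs2 : (2:ℝ) ≤ s := by nlinarith
  have ht4 : (4:ℝ) ≤ t := by nlinarith
  have ht0' : (0:ℝ) < t := by linarith
  have ht0 : 0 < t := by exact_mod_cast ht0'
  set q : ℝ := s⁻¹ with hqdef
  have hsi : s * q = 1 := mul_inv_cancel₀ hs0.ne'
  have hq0 : 0 < q := by positivity
  have hqhalf : q ≤ 1/2 := by nlinarith
  have hqn : q * n = s := by rw [← hss, hqdef]; field_simp
  have hp2 : p < 1/2 := lt_of_lt_of_le (hq ▸ hpq) hqhalf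
  have h1p : 0 < 1 - p := by linarith
  have h1q : 0 < 1 - q := by linarith
  have hchoose1 : (1:ℝ) ≤ (n.choose t : ℝ) := by
    exact_mod_cast Nat.one_le_iff_ne_zero.mpr (Nat.choose_pos htn).ne'
  set B : ℝ := (n.choose t : ℝ) * q ^ t * (1 - q) ^ (n - t) with hBdef
  have hB0 : 0 < B := by positivity
  have hlog2 : (0.6931:ℝ) < Real.log 2 := by
    have := Real.log_two_gt_d9; linarith
  -- Step 1: B ≤ exp(-(log 2 - 1/2) * t)
  have hBexp : B ≤ Real.exp (-(Real.log 2 - 1/2) * t) := by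
    rcases eq_or_lt_of_le htn with heq | hlt
    · -- t = n
      subst heq
      have hBq : B = q ^ t := by simp [hBdef, Nat.choose_self]
      rw [hBq]
      have hqe : q ^ t = Real.exp (t * Real.log q) := by
        rw [← Real.exp_log hq0, ← Real.exp_nat_mul, Real.log_exp]
      rw [hqe, Real.exp_le_exp]
      have hlogq : Real.log q = - Real.log s := by rw [hqdef, Real.log_inv]
      have hlogs : Real.log 2 ≤ Real.log s := Real.log_le_log (by norm_num) hs2
      rw [hlogq]
      nlinarith
    · -- t < n
      set m : ℕ := n - t with hmdef
      have hm0 : 0 < m := Nat.sub_pos_of_lt hlt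
      have hm0' : (0:ℝ) < m := by exact_mod_cast hm0
      have hmn : (m:ℝ) = (n:ℝ) - t := by
        rw [hmdef]; push_cast [Nat.cast_sub htn]; ring
      have h1 : ((t:ℝ)/n) ^ t * ((m:ℝ)/n) ^ (n - t) * (n.choose t : ℝ) ≤ 1 := by
        apply aux_term_le_one n t htn (by positivity) (by positivity)
        rw [hmn]; field_simp; ring
      have hbase : (1 - q) * n / m ≤ Real.exp ((t - s)/m) := by
        have h2 : (1 - q) * n / m = (t - s)/m + 1 := by
          rw [div_add_one hm0'.ne']
          congr 1
          rw [hmn]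
          nlinarith [hqn]
        rw [h2]
        exact Real.add_one_le_exp _
      have hbase0 : (0:ℝ) ≤ (1 - q) * n / m := by positivity
      have hf2 : ((1 - q) * n / m) ^ m ≤ Real.exp ((t:ℝ) - s) := by
        calc ((1 - q) * n / m) ^ m ≤ (Real.exp ((t - s)/m)) ^ m :=
              pow_le_pow_left₀ hbase0 hbase m
          _ = Real.exp (m * (((t:ℝ) - s)/m)) := by rw [← Real.exp_nat_mul]
          _ = Real.exp ((t:ℝ) - s) := by rw [mul_div_cancel₀ _ hm0'.ne']
      have hf1 : (s / t) ^ t = Real.exp (t * Real.log (s / t)) := by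
        rw [← Real.exp_log (show (0:ℝ) < s / t by positivity), ← Real.exp_nat_mul,
          Real.log_exp]
      have e1 : (t:ℝ)/n * (s/t) = q := by
        rw [hqdef, ← hss]; field_simp; try ring
      have e2 : (m:ℝ)/n * ((1 - q) * n / m) = 1 - q := by
        field_simp; try ring
      have hdecomp : B = (((t:ℝ)/n) ^ t * ((m:ℝ)/n) ^ (n-t) * (n.choose t : ℝ)) *
          ((s / t) ^ t * ((1 - q) * n / m) ^ (n-t)) := by
        calc B = (n.choose t : ℝ) * ((t:ℝ)/n * (s/t)) ^ t *
              (((m:ℝ)/n) * ((1 - q) * n / m)) ^ (n-t) := by rw [e1, e2]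
          _ = _ := by rw [mul_pow, mul_pow]; ring
      have hB1 : B ≤ Real.exp (t * Real.log (s / t) + ((t:ℝ) - s)) := by
        have hmeq : (n - t) = m := rfl
        calc B = (((t:ℝ)/n) ^ t * ((m:ℝ)/n) ^ (n-t) * (n.choose t : ℝ)) *
              ((s / t) ^ t * ((1 - q) * n / m) ^ (n-t)) := hdecomp
          _ ≤ 1 * ((s / t) ^ t * Real.exp ((t:ℝ) - s)) := by
              apply mul_le_mul h1 _ (by positivity) (by norm_num)
              apply mul_le_mul_of_nonneg_left _ (by positivity)
              rw [hmeq]; exact hf2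
          _ = Real.exp (t * Real.log (s / t) + ((t:ℝ) - s)) := by
              rw [one_mul, hf1, ← Real.exp_add]
      have hkey : (t:ℝ) * Real.log (s / t) + ((t:ℝ) - s) ≤ -(Real.log 2 - 1/2) * t := by
        have hx : (0:ℝ) < 2 * s / t := by positivity
        have h3 : Real.log (2 * s / t) ≤ 2 * s / t - 1 := Real.log_le_sub_one_of_pos hx
        have h4 : Real.log (2 * s / t) = Real.log 2 + Real.log s - Real.log t := by
          rw [Real.log_div (by positivity) ht0'.ne', Real.log_mul (by norm_num) hs0.ne']
        have h5 : Real.log (s / t) = Real.log s - Real.log t := by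
          rw [Real.log_div hs0.ne' ht0'.ne']
        rw [h5]
        have h6 : (t:ℝ) * (Real.log s - Real.log t) ≤ t * (2 * s / t - 1 - Real.log 2) := by
          apply mul_le_mul_of_nonneg_left _ ht0'.le
          linarith [h3, h4]
        have h7 : (t:ℝ) * (2 * s / t - 1 - Real.log 2) = 2*s - t - t * Real.log 2 := by
          field_simp; try ring
        nlinarith
      calc B ≤ Real.exp (t * Real.log (s / t) + ((t:ℝ) - s)) := hB1
        _ ≤ Real.exp (-(Real.log 2 - 1/2) * t) := Real.exp_le_exp.mpr hkey
  -- Step 2: exp(t log p - t) ≤ RHS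
  have hRHS : Real.exp (t * Real.log p - t) ≤ (n.choose t : ℝ) * p ^ t * (1 - p) ^ (n - t) := by
    have hlog1p : -(2*p) ≤ Real.log (1 - p) := by
      have h8 : Real.log (1 - p)⁻¹ ≤ (1 - p)⁻¹ - 1 := Real.log_le_sub_one_of_pos (by positivity)
      rw [Real.log_inv] at h8
      have h9 : (1 - p)⁻¹ - 1 ≤ 2 * p := by
        rw [inv_eq_one_div, div_sub' h1p.ne']
        rw [div_le_iff₀ h1p]
        nlinarith
      linarith
    have hpn : 2 * p * n ≤ t := by
      have : p * n ≤ q * n := mul_le_mul_of_nonneg_right (le_of_lt (hq ▸ hpq)) hn0.le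
      nlinarith [hqn]
    have hlb : Real.exp (t * Real.log p - t) ≤ p ^ t * (1 - p) ^ n := by
      have hpe : p ^ t = Real.exp (t * Real.log p) := by
        rw [← Real.exp_log hp0, ← Real.exp_nat_mul, Real.log_exp]
      have h1pe : (1 - p) ^ n = Real.exp (n * Real.log (1 - p)) := by
        rw [← Real.exp_log h1p, ← Real.exp_nat_mul, Real.log_exp]
      rw [hpe, h1pe, ← Real.exp_add, Real.exp_le_exp]
      have : (n:ℝ) * (-(2*p)) ≤ n * Real.log (1 - p) :=
        mul_le_mul_of_nonneg_left hlog1p hn0.le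
      nlinarith
    have hmono : (1 - p) ^ n ≤ (1 - p) ^ (n - t) :=
      pow_le_pow_of_le_one h1p.le (by linarith) (Nat.sub_le n t)
    calc Real.exp (t * Real.log p - t) ≤ p ^ t * (1 - p) ^ n := hlb
      _ ≤ p ^ t * (1 - p) ^ (n - t) := by
          apply mul_le_mul_of_nonneg_left hmono (by positivity)
      _ ≤ (n.choose t : ℝ) * p ^ t * (1 - p) ^ (n - t) := by
          rw [mul_assoc]
          nth_rewrite 1 [← one_mul (p ^ t * (1 - p) ^ (n - t))]
          apply mul_le_mul_of_nonneg_right hchoose1 (by positivity)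
  -- Step 3: combine
  have hL : Real.log 2 ≤ Real.log (1/p) := by
    apply Real.log_le_log (by norm_num)
    rw [le_div_iff₀ hp0]; linarith
  have hLp : Real.log (1/p) = - Real.log p := by
    rw [one_div, Real.log_inv]
  rw [hq]
  show B ^ ((20:ℝ) * Real.log (1/p)) ≤ _
  have hk0 : 0 < (20:ℝ) * Real.log (1/p) := by nlinarith
  have hlogB : Real.log B ≤ -(Real.log 2 - 1/2) * t := by
    rw [Real.log_le_iff_le_exp hB0]
    exact hBexp
  calc B ^ ((20:ℝ) * Real.log (1/p))
      = Real.exp (Real.log B * ((20:ℝ) * Real.log (1/p))) := Real.rpow_def_of_pos hB0 _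
    _ ≤ Real.exp (t * Real.log p - t) := by
        rw [Real.exp_le_exp]
        set L := Real.log (1/p) with hLdef
        have hstep : Real.log B * (20 * L) ≤ (-(Real.log 2 - 1/2) * t) * (20 * L) :=
          mul_le_mul_of_nonneg_right hlogB hk0.le
        have hnum : L + 1 ≤ 20 * (Real.log 2 - 1/2) * L := by nlinarith
        have hnum2 : (-(Real.log 2 - 1/2) * t) * (20 * L) ≤ t * Real.log p - t := by
          have : (t:ℝ) * (L + 1) ≤ t * (20 * (Real.log 2 - 1/2) * L) :=
            mul_le_mul_of_nonneg_left hnum ht0'.le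
          rw [hLp] at this ⊢
          nlinarith
        linarith
    _ ≤ _ := hRHS
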